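/- Let $V$ be a finite-dimensional real Hilbert space with inner product $a(\cdot,\cdot)$, and $V = \sum_{\ell=0}^L \mathcal{V}_\ell$ a (not necessarily direct) sum of subspaces $\mathcal{V}_\ell \subseteq V$ equipped with symmetric positive definite bilinear forms $a_\ell$. Suppose there is $C_1 > 0$ such that for every decomposition $u = \sum_{\ell=0}^L u_\ell$ with $u_\ell \in \mathcal{V}_\ell$ one has $a(u,u) \leq C_1 \sum_{\ell=0}^L a_\ell(u_\ell,u_\ell)$, and $C_0 > 0$ such that every $u \in V$ admits some decomposition $u = \sum_\ell u_\ell$ with $\sum_\ell a_\ell(u_\ell,u_\ell) \leq C_0\, a(u,u)$. Define the additive Schwarz operator $P = \sum_{\ell=0}^L E_\ell A_\ell^{-1} E_\ell^* A$ where $E_\ell: \mathcal{V}_\ell \to V$ is the inclusion, $A$ and $A_\ell$ are the operators induced by $a$ and $a_\ell$. Then all eigenvalues $\lambda$ of $P$ satisfy $C_0^{-1} \leq \lambda \leq C_1$. -/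
import Mathlib


open scoped RealInnerProductSpace

/-- Abstract additive Schwarz theory: eigenvalue bounds for the additive Schwarz
operator `P = ∑ Pℓ`, where `Pℓ u ∈ 𝒱ℓ` is defined by `aℓ(Pℓ u, v) = a(u,v)` for
`v ∈ 𝒱ℓ`, under the stable-decomposition and boundedness hypotheses. -/
theorem stmt6 {V : Type*} [NormedAddCommGroup V] [InnerProductSpace ℝ V]
    [FiniteDimensional ℝ V] (L : ℕ)
    (𝒱 : Fin (L+1) → Submodule ℝ V)
    (hsum : ∀ u : V, ∃ w : Fin (L+1) → V, (∀ ℓ, w ℓ ∈ 𝒱 ℓ) ∧ u = ∑ ℓ, w ℓ)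
    (a : Fin (L+1) → V → V → ℝ)
    (hsymm : ∀ ℓ u v, a ℓ u v = a ℓ v u)
    (hpos : ∀ ℓ, ∀ u ∈ 𝒱 ℓ, u ≠ 0 → 0 < a ℓ u u)
    (C0 C1 : ℝ) (hC0 : 0 < C0) (hC1 : 0 < C1)
    (hupper : ∀ (u : V) (w : Fin (L+1) → V), (∀ ℓ, w ℓ ∈ 𝒱 ℓ) → u = ∑ ℓ, w ℓ →
        ⟪u, u⟫ ≤ C1 * ∑ ℓ, a ℓ (w ℓ) (w ℓ))
    (hlower : ∀ u : V, ∃ w : Fin (L+1) → V, (∀ ℓ, w ℓ ∈ 𝒱 ℓ) ∧ u = ∑ ℓ, w ℓ ∧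
        ∑ ℓ, a ℓ (w ℓ) (w ℓ) ≤ C0 * ⟪u, u⟫)
    (Pl : Fin (L+1) → (V →ₗ[ℝ] V))
    (hPmem : ∀ ℓ u, Pl ℓ u ∈ 𝒱 ℓ)
    (hPdef : ∀ ℓ (u : V), ∀ v ∈ 𝒱 ℓ, a ℓ (Pl ℓ u) v = ⟪u, v⟫)
    (P : V →ₗ[ℝ] V) (hP : P = ∑ ℓ, Pl ℓ)
    (lam : ℝ) (hlam : Module.End.HasEigenvalue P lam) :
    C0⁻¹ ≤ lam ∧ lam ≤ C1 := by
  obtain ⟨u, hu⟩ := hlam.exists_hasEigenvector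
  have hu0 : u ≠ 0 := hu.right
  have hPu : P u = lam • u := hu.apply_eq_smul
  set M : ℝ := ⟪u, u⟫ with hMdef
  have hM : 0 < M :=
    lt_of_le_of_ne real_inner_self_nonneg (fun h => hu0 (inner_self_eq_zero.mp h.symm))
  -- a ℓ 0 v = 0 for v ∈ 𝒱 ℓ
  have hzero : ∀ ℓ, ∀ v ∈ 𝒱 ℓ, a ℓ 0 v = 0 := by
    intro ℓ v hv
    have h := hPdef ℓ 0 v hv
    rw [map_zero] at h
    rw [h, inner_zero_left]
  -- Pl ℓ restricted to 𝒱 ℓ is surjective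
  have hsurj : ∀ ℓ, ∀ x ∈ 𝒱 ℓ, ∃ p, p ∈ 𝒱 ℓ ∧ Pl ℓ p = x := by
    intro ℓ x hx
    have hres : ∀ y ∈ 𝒱 ℓ, Pl ℓ y ∈ 𝒱 ℓ := fun y _ => hPmem ℓ y
    set f : 𝒱 ℓ →ₗ[ℝ] 𝒱 ℓ := (Pl ℓ).restrict hres with hf
    have hinj : Function.Injective f := by
      rw [← LinearMap.ker_eq_bot, LinearMap.ker_eq_bot']
      intro z hz
      have hz' : Pl ℓ (z : V) = 0 := by
        have := congrArg Subtype.val hz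
        simpa [hf, LinearMap.restrict_apply] using this
      have h2 := hPdef ℓ (z : V) (z : V) z.2
      rw [hz', hzero ℓ _ z.2] at h2
      exact Subtype.ext (inner_self_eq_zero.mp h2.symm)
    have hsur : Function.Surjective f := (LinearMap.injective_iff_surjective).mp hinj
    obtain ⟨p, hp⟩ := hsur ⟨x, hx⟩
    refine ⟨p, p.2, ?_⟩
    have := congrArg Subtype.val hp
    simpa [hf, LinearMap.restrict_apply] using this
  -- linearity of aℓ in first argument on 𝒱 ℓ
  have hlin : ∀ ℓ (t : ℝ), ∀ x ∈ 𝒱 ℓ, ∀ y ∈ 𝒱 ℓ, ∀ z ∈ 𝒱 ℓ,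
      a ℓ (x + t • y) z = a ℓ x z + t * a ℓ y z := by
    intro ℓ t x hx y hy z hz
    obtain ⟨p, hp, hpx⟩ := hsurj ℓ x hx
    obtain ⟨q, hq, hqy⟩ := hsurj ℓ y hy
    have hxy : x + t • y = Pl ℓ (p + t • q) := by
      rw [map_add, map_smul, hpx, hqy]
    have h1 : a ℓ x z = ⟪p, z⟫ := by rw [← hpx]; exact hPdef ℓ p z hz
    have h2 : a ℓ y z = ⟪q, z⟫ := by rw [← hqy]; exact hPdef ℓ q z hz
    rw [hxy, hPdef ℓ _ z hz, h1, h2, inner_add_left, real_inner_smul_left]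
  -- nonnegativity on 𝒱 ℓ
  have hnn : ∀ ℓ, ∀ x ∈ 𝒱 ℓ, 0 ≤ a ℓ x x := by
    intro ℓ x hx
    rcases eq_or_ne x 0 with h | h
    · subst h; rw [hzero ℓ 0 hx]
    · exact (hpos ℓ x hx h).le
  -- stable decomposition of u
  obtain ⟨v, hv, huv, hS⟩ := hlower u
  set w : Fin (L+1) → V := fun ℓ => Pl ℓ u with hw
  set S : ℝ := ∑ ℓ, a ℓ (v ℓ) (v ℓ) with hSdef
  set T : ℝ := ∑ ℓ, a ℓ (w ℓ) (w ℓ) with hTdef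
  have hPuw : P u = ∑ ℓ, w ℓ := by rw [hP]; simp [hw, LinearMap.sum_apply]
  have hT : T = lam * M := by
    have : T = ∑ ℓ, ⟪u, w ℓ⟫ := by
      refine Finset.sum_congr rfl fun ℓ _ => ?_
      exact hPdef ℓ u (w ℓ) (hPmem ℓ u)
    rw [this, ← inner_sum, ← hPuw, hPu, real_inner_smul_right]
  have hT0 : 0 ≤ T := Finset.sum_nonneg fun ℓ _ => hnn ℓ (w ℓ) (hPmem ℓ u)
  have hMsum : M = ∑ ℓ, a ℓ (w ℓ) (v ℓ) := by
    have : M = ∑ ℓ, ⟪u, v ℓ⟫ := by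
      rw [hMdef]; nth_rewrite 2 [huv]; rw [inner_sum]
    rw [this]
    exact Finset.sum_congr rfl fun ℓ _ => (hPdef ℓ u (v ℓ) (hv ℓ)).symm
  -- quadratic nonnegativity
  have hquad : ∀ t : ℝ, 0 ≤ S * (t * t) + (2 * M) * t + T := by
    intro t
    have hterm : ∀ ℓ : Fin (L+1),
        a ℓ (w ℓ + t • v ℓ) (w ℓ + t • v ℓ)
          = a ℓ (w ℓ) (w ℓ) + 2 * t * a ℓ (w ℓ) (v ℓ) + t ^ 2 * a ℓ (v ℓ) (v ℓ) := by
      intro ℓ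
      have hwm := hPmem ℓ u
      have hvm := hv ℓ
      have hmem : w ℓ + t • v ℓ ∈ 𝒱 ℓ := (𝒱 ℓ).add_mem hwm ((𝒱 ℓ).smul_mem t hvm)
      rw [hlin ℓ t (w ℓ) hwm (v ℓ) hvm _ hmem,
        hsymm ℓ (w ℓ) (w ℓ + t • v ℓ), hsymm ℓ (v ℓ) (w ℓ + t • v ℓ),
        hlin ℓ t (w ℓ) hwm (v ℓ) hvm (w ℓ) hwm,
        hlin ℓ t (w ℓ) hwm (v ℓ) hvm (v ℓ) hvm,
        hsymm ℓ (v ℓ) (w ℓ)]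
      ring
    have h0 : 0 ≤ ∑ ℓ, a ℓ (w ℓ + t • v ℓ) (w ℓ + t • v ℓ) :=
      Finset.sum_nonneg fun ℓ _ =>
        hnn ℓ _ ((𝒱 ℓ).add_mem (hPmem ℓ u) ((𝒱 ℓ).smul_mem t (hv ℓ)))
    calc (0:ℝ) ≤ ∑ ℓ, a ℓ (w ℓ + t • v ℓ) (w ℓ + t • v ℓ) := h0
      _ = S * (t * t) + (2 * M) * t + T := by
          simp only [hterm]
          rw [Finset.sum_add_distrib, Finset.sum_add_distrib, ← Finset.mul_sum,
            ← Finset.mul_sum, ← hMsum]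
          ring
  have hdisc := discrim_le_zero hquad
  rw [discrim] at hdisc
  -- hdisc : (2*M)^2 - 4*S*T ≤ 0
  have hST : M ^ 2 ≤ S * T := by nlinarith
  have hS' : S ≤ C0 * M := hS
  have hC0lam : 1 ≤ C0 * lam := by
    have h1 : S * T ≤ (C0 * M) * T := mul_le_mul_of_nonneg_right hS' hT0
    rw [hT] at hST h1
    nlinarith [mul_pos hM hM]
  have hlampos : 0 < lam := by nlinarith
  constructor
  · rw [inv_eq_one_div, div_le_iff₀ hC0]
    nlinarith
  · -- upper bound
    have hPP := hupper (P u) w (fun ℓ => hPmem ℓ u) hPuw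
    rw [hPu, real_inner_smul_left, real_inner_smul_right] at hPP
    rw [← hTdef, hT, ← hMdef] at hPP
    nlinarith [mul_pos hlampos hM]
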